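/- arXiv:1701.09160 — 2 statements merged into one kernel-verified Lean document; each statement's English description precedes it below -/
import Mathlib

section
/- Stationarity of the split-normal likelihood in τ: let n ≥ 1 and s₁, s₂ > 0. The system of equations −n/σ + σ⁻³(s₁ + τ⁻²s₂) = 0 and −n/(1+τ) + s₂/(τ³σ²) = 0 in unknowns σ > 0, τ > 0 has the solution τ = (s₂/s₁)^{1/3} and σ² = (1/n)·s₁^{2/3}·(s₁^{1/3} + s₂^{1/3}). -/
open Real

/-- Stationarity of the split-normal likelihood: `τ = (s₂/s₁)^{1/3}` and
`σ² = (1/n)·s₁^{2/3}·(s₁^{1/3} + s₂^{1/3})` solve the first-order conditions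
`-n/σ + σ⁻³(s₁ + τ⁻²s₂) = 0` and `-n/(1+τ) + s₂/(τ³σ²) = 0`. -/
theorem splitNormal_stationarity (n : ℕ) (hn : 1 ≤ n) (s₁ s₂ : ℝ)
    (hs₁ : 0 < s₁) (hs₂ : 0 < s₂) (τ σ : ℝ)
    (hτ : τ = (s₂ / s₁) ^ ((1 : ℝ) / 3)) (hσpos : 0 < σ)
    (hσ : σ ^ 2 = (1 / (n : ℝ)) * s₁ ^ ((2 : ℝ) / 3)
        * (s₁ ^ ((1 : ℝ) / 3) + s₂ ^ ((1 : ℝ) / 3))) :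
    -(n : ℝ) / σ + σ⁻¹ ^ 3 * (s₁ + τ⁻¹ ^ 2 * s₂) = 0 ∧
    -(n : ℝ) / (1 + τ) + s₂ / (τ ^ 3 * σ ^ 2) = 0 := by
  have hn0 : (0:ℝ) < n := by exact_mod_cast hn
  set a := s₁ ^ ((1:ℝ)/3) with hadef
  set b := s₂ ^ ((1:ℝ)/3) with hbdef
  have ha0 : 0 < a := rpow_pos_of_pos hs₁ _
  have hb0 : 0 < b := rpow_pos_of_pos hs₂ _
  have ha3 : a ^ (3:ℕ) = s₁ := by
    rw [hadef, ← rpow_natCast, ← rpow_mul hs₁.le]; norm_num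
  have hb3 : b ^ (3:ℕ) = s₂ := by
    rw [hbdef, ← rpow_natCast, ← rpow_mul hs₂.le]; norm_num
  have ha2 : s₁ ^ ((2:ℝ)/3) = a ^ (2:ℕ) := by
    rw [hadef, ← rpow_natCast, ← rpow_mul hs₁.le]; norm_num
  have hτ' : τ = b / a := by
    rw [hτ, div_rpow hs₂.le hs₁.le]
  have hτ0 : 0 < τ := by rw [hτ']; positivity
  have hσ2 : (n:ℝ) * σ ^ 2 = a ^ 2 * (a + b) := by
    rw [hσ, ha2]; field_simp
  constructor
  · rw [hτ']
    have hσne : σ ≠ 0 := hσpos.ne'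
    field_simp
    linear_combination -b^2*hσ2 - b^2*ha3 - a^2*hb3
  · rw [hτ']
    field_simp
    linear_combination -a*b^3*hσ2 - a^3*(a+b)*hb3
end

section
/- Verification that the claimed MLE estimators satisfy the first-order conditions: with σ̂² = (1/n)·s₁^{2/3}·(s₁^{1/3} + s₂^{1/3}) and τ̂ = (s₂/s₁)^{1/3} (s₁, s₂ > 0, n ≥ 1), both equations −n/σ̂ + σ̂⁻³(s₁ + τ̂⁻²s₂) = 0 and −n/(1+τ̂) + s₂/(τ̂³·σ̂²) = 0 hold. -/
open Real

/-- Verification that the claimed MLE estimators satisfy the first-order conditions: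
with `σ̂` the positive square root of `(1/n)·s₁^{2/3}·(s₁^{1/3}+s₂^{1/3})` and
`τ̂ = (s₂/s₁)^{1/3}`, both stationarity equations hold. -/
theorem splitNormal_mle_verification (n : ℕ) (hn : 1 ≤ n) (s₁ s₂ : ℝ)
    (hs₁ : 0 < s₁) (hs₂ : 0 < s₂) :
    let τ : ℝ := (s₂ / s₁) ^ ((1 : ℝ) / 3)
    let σ : ℝ := Real.sqrt ((1 / (n : ℝ)) * s₁ ^ ((2 : ℝ) / 3)
        * (s₁ ^ ((1 : ℝ) / 3) + s₂ ^ ((1 : ℝ) / 3)))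
    (-(n : ℝ) / σ + σ⁻¹ ^ 3 * (s₁ + τ⁻¹ ^ 2 * s₂) = 0) ∧
    (-(n : ℝ) / (1 + τ) + s₂ / (τ ^ 3 * σ ^ 2) = 0) := by
  intro τ σ
  have hn' : (0 : ℝ) < n := by positivity
  set a := s₁ ^ ((1 : ℝ) / 3) with ha_def
  set b := s₂ ^ ((1 : ℝ) / 3) with hb_def
  have ha : 0 < a := rpow_pos_of_pos hs₁ _
  have hb : 0 < b := rpow_pos_of_pos hs₂ _
  have ha3 : a ^ 3 = s₁ := by
    rw [ha_def, ← rpow_natCast (s₁ ^ ((1:ℝ)/3)) 3, ← rpow_mul hs₁.le]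
    norm_num
  have hb3 : b ^ 3 = s₂ := by
    rw [hb_def, ← rpow_natCast (s₂ ^ ((1:ℝ)/3)) 3, ← rpow_mul hs₂.le]
    norm_num
  have ha2 : s₁ ^ ((2 : ℝ) / 3) = a ^ 2 := by
    rw [ha_def, ← rpow_natCast (s₁ ^ ((1:ℝ)/3)) 2, ← rpow_mul hs₁.le]
    norm_num
  have hτ : τ = b / a := by
    simp only [τ, ha_def, hb_def, ← Real.div_rpow hs₂.le hs₁.le]
  have hσpos : 0 < σ := Real.sqrt_pos.2 (by positivity)
  have hσ2 : σ ^ 2 = (1 / n) * a ^ 2 * (a + b) := by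
    rw [show σ ^ 2 = (1 / (n:ℝ)) * s₁ ^ ((2:ℝ)/3) * (a + b) from
      Real.sq_sqrt (by positivity), ha2]
  constructor
  · have h1 : s₁ + τ⁻¹ ^ 2 * s₂ = n * σ ^ 2 := by
      rw [hσ2, hτ, ← ha3, ← hb3]
      field_simp
    rw [h1]
    field_simp [hσpos.ne']
    ring
  · have hτpos : 0 < τ := by rw [hτ]; positivity
    rw [hτ, hσ2, ← hb3]
    have h1a : (0:ℝ) < 1 + b / a := by positivity
    field_simp
    ring
end
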